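/- Let ⋆ be a semistar operation on an integral domain D with quotient field K. Then the overring D^{[⋆]} := ∪{(H^⋆ :_K H^⋆) : H a nonzero finitely generated D-submodule of K} is t-linked to (D,⋆). If moreover (D :_K D^⋆) ≠ (0), then the complete integral closure of D (the set of x ∈ K for which there exists a nonzero d ∈ D with d·x^n ∈ D for all n ≥ 0) is t-linked to (D,⋆); in particular, the complete integral closure of D is always t-linked to D with respect to the t-operation (i.e. (t_D, t)-linked). -/

import Mathlib

open Pointwise

/-! Basic framework for semistar operations on an integral domain `D`
with quotient field `K`. Submodules of `K` play the role of the
`D`-submodules of the quotient field. -/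

section Generic

variable (R : Type*) (K : Type*) [CommRing R] [Field K] [Algebra R K]

/-- A semistar operation on `R` (with ambient field `K`): a map on the nonzero
`R`-submodules of `K` satisfying (⋆₁), (⋆₂), (⋆₃). The map is total on
`Submodule R K`, but the axioms are only imposed on nonzero submodules. -/
structure SemistarOp where
  toFun : Submodule R K → Submodule R K
  smul' : ∀ x : K, x ≠ 0 → ∀ E : Submodule R K, E ≠ ⊥ → toFun (x • E) = x • toFun E
  mono' : ∀ E F : Submodule R K, E ≠ ⊥ → F ≠ ⊥ → E ≤ F → toFun E ≤ toFun F
  le_star' : ∀ E : Submodule R K, E ≠ ⊥ → E ≤ toFun E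
  idem' : ∀ E : Submodule R K, E ≠ ⊥ → toFun (toFun E) = toFun E

variable {R K}

/-- The `R`-submodule of `K` generated by (the image of) an ideal of `R`. -/
def idealSub (I : Ideal R) : Submodule R K := Submodule.map (Algebra.linearMap R K) I

/-- The finite-type operation `⋆_f` associated to (the function underlying) a semistar
operation: `E^{⋆_f} = ∪ { F^⋆ : F nonzero finitely generated, F ⊆ E }`. -/
def starF (f : Submodule R K → Submodule R K) (E : Submodule R K) : Submodule R K :=
  sSup {G | ∃ F : Submodule R K, F.FG ∧ F ≠ ⊥ ∧ F ≤ E ∧ G = f F}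

/-- `I` is a quasi-⋆-ideal: `I ≠ 0` and `I^⋆ ∩ R = I`. -/
def QuasiIdeal (f : Submodule R K → Submodule R K) (I : Ideal R) : Prop :=
  I ≠ ⊥ ∧ Submodule.comap (Algebra.linearMap R K) (f (idealSub I)) = I

/-- `I` is a quasi-⋆-prime: a prime quasi-⋆-ideal. -/
def QuasiPrime (f : Submodule R K → Submodule R K) (I : Ideal R) : Prop :=
  QuasiIdeal f I ∧ I.IsPrime

/-- `I` is a quasi-⋆-maximal: maximal among proper quasi-⋆-ideals. -/
def QuasiMax (f : Submodule R K → Submodule R K) (I : Ideal R) : Prop :=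
  QuasiIdeal f I ∧ I ≠ ⊤ ∧ ∀ J : Ideal R, QuasiIdeal f J → J ≠ ⊤ → I ≤ J → I = J

/-- The localization `E·R_Q` of a submodule `E` of `K` at (the complement of) `Q`:
for prime `Q` this is `{x ∈ K : s·x ∈ E for some s ∉ Q}`. -/
def locSub (Q : Ideal R) (E : Submodule R K) : Submodule R K :=
  Submodule.span R {x : K | ∃ s : R, s ∉ Q ∧ algebraMap R K s * x ∈ E}

/-- The spectral semistar operation `⋆̃` associated to `⋆`:
`E^{⋆̃} = ∩ { E R_Q : Q quasi-⋆_f-maximal }` (equal to `K` if there are none). -/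
def tildeOp (f : Submodule R K → Submodule R K) (E : Submodule R K) : Submodule R K :=
  ⨅ (Q : Ideal R) (_ : QuasiMax (starF f) Q), locSub Q E

/-- The `v`-operation `E ↦ (R :_K (R :_K E))`. -/
def vOp (E : Submodule R K) : Submodule R K := 1 / (1 / E)

/-- The `t`-operation: the finite-type operation associated to `v`. -/
def tOp : Submodule R K → Submodule R K := starF (vOp (R := R) (K := K))

/-- `R` is a Prüfer ⋆-multiplication domain: every nonzero finitely generated ideal `F`
is ⋆_f-invertible, i.e. `(F·(R :_K F))^{⋆_f} = R^⋆`. -/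
def PSMD (f : Submodule R K → Submodule R K) : Prop :=
  ∀ F : Ideal R, F ≠ ⊥ → F.FG →
    starF f (idealSub F * ((1 : Submodule R K) / idealSub F)) = f 1

/-- The content ideal of a polynomial: the ideal generated by its coefficients. -/
def contentI (h : Polynomial R) : Ideal R := Ideal.span (Set.range h.coeff)

/-- The Nagata ring `Na(R,⋆) = R[X]_{N(⋆)}`, realized as the subset
`{g/h : g, h ∈ R[X], h ≠ 0, c(h)^⋆ = R^⋆}` of the field `K(X)` of rational functions. -/
def NaSet (f : Submodule R K → Submodule R K) : Set (RatFunc K) :=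
  {x | ∃ g h : Polynomial R, h ≠ 0 ∧ f (idealSub (contentI h)) = f 1 ∧
    x * algebraMap (Polynomial K) (RatFunc K) (h.map (algebraMap R K)) =
      algebraMap (Polynomial K) (RatFunc K) (g.map (algebraMap R K))}

/-- The Nagata ring as a subring of `K(X)` (the set `NaSet` is multiplicatively
saturated, so it coincides with the subring it generates). -/
noncomputable def NaSub (f : Submodule R K → Submodule R K) : Subring (RatFunc K) :=
  Subring.closure (NaSet f)

/-- A subset `S` of `K` is integrally closed (in `K`) if every element of `K` which is a root
of a monic polynomial with coefficients in `S` lies in `S`. -/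
def IntClosedSet (S : Set K) : Prop :=
  ∀ x : K, (∃ p : Polynomial K, p.Monic ∧ (∀ n, p.coeff n ∈ S) ∧ p.eval x = 0) → x ∈ S

/-- A subset `S` of `K` is seminormal if `x² ∈ S` and `x³ ∈ S` imply `x ∈ S`. -/
def SeminormalSet (S : Set K) : Prop := ∀ x : K, x ^ 2 ∈ S → x ^ 3 ∈ S → x ∈ S

/-- `T` is `(f,g)`-linked to `T` (case `D = T` of linkedness). -/
def LinkedSelf (f g : Submodule R K → Submodule R K) : Prop :=
  ∀ G : Ideal R, G ≠ ⊥ → G.FG → f (idealSub G) = f 1 → g (idealSub G) = g 1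

end Generic

section Overring

variable {D : Type*} {K : Type*} [CommRing D] [Field K] [Algebra D K]

/-- The `T`-submodule `E·T` of `K` generated by a `D`-submodule `E` of `K`. -/
def extT (T : Subalgebra D K) (E : Submodule D K) : Submodule ↥T K :=
  Submodule.span ↥T (E : Set K)

/-- `T` is `(⋆,⋆')`-linked to `D`: for every nonzero finitely generated integral ideal `F`
of `D`, `F^⋆ = D^⋆` implies `(FT)^{⋆'} = T^{⋆'}`. -/
def LinkedF (f : Submodule D K → Submodule D K) (T : Subalgebra D K)
    (g : Submodule ↥T K → Submodule ↥T K) : Prop :=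
  ∀ F : Ideal D, F ≠ ⊥ → F.FG → f (idealSub F) = f 1 → g (extT T (idealSub F)) = g 1

/-- `T` is `t`-linked to `(D,⋆)`: `T` is `(⋆, t_T)`-linked to `D`. -/
def TLinked (f : Submodule D K → Submodule D K) (T : Subalgebra D K) : Prop :=
  LinkedF f T (tOp (R := ↥T) (K := K))

/-- The semistar operation `ℓ_{⋆,T}` on `T`:
`E^ℓ = ∩ { E T_{D∖P} : P quasi-⋆_f-prime of D }` (equal to `K` if there are none). -/
def ellOp (f : Submodule D K → Submodule D K) (T : Subalgebra D K)
    (E : Submodule ↥T K) : Submodule ↥T K :=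
  ⨅ (P : Ideal D) (_ : QuasiPrime (starF f) P),
    Submodule.span ↥T {x : K | ∃ r : D, r ∉ P ∧ algebraMap D K r * x ∈ E}

/-- The localization `D_P` of `D` at a prime `P`, as a subalgebra of `K`. -/
def Dloc (P : Ideal D) : Subalgebra D K :=
  Algebra.adjoin D {x : K | ∃ r : D, r ∉ P ∧ algebraMap D K r * x ∈ (⊥ : Subalgebra D K)}

/-- The localization `T_{D∖P}` of an overring `T` at the multiplicative set `D∖P`,
as a subalgebra of `K`. -/
def TlocD (T : Subalgebra D K) (P : Ideal D) : Subalgebra D K :=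
  Algebra.adjoin D {x : K | ∃ r : D, r ∉ P ∧ algebraMap D K r * x ∈ T}

/-- The localization `T_Q` of an overring `T` at a prime `Q` of `T`,
as a subalgebra of `K`. -/
def TlocQ (T : Subalgebra D K) (Q : Ideal ↥T) : Subalgebra D K :=
  Algebra.adjoin D {x : K | ∃ t : ↥T, t ∉ Q ∧ (t : K) * x ∈ T}

/-- `T` is `(⋆,⋆')`-flat over `D`: `T` is `(⋆,⋆')`-linked to `D` and `D_{Q∩D} = T_Q`
for every quasi-⋆'_f-prime `Q` of `T`. -/
def FlatF (f : Submodule D K → Submodule D K) (T : Subalgebra D K)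
    (g : Submodule ↥T K → Submodule ↥T K) : Prop :=
  LinkedF f T g ∧
    ∀ Q : Ideal ↥T, QuasiPrime (starF g) Q →
      Dloc (Q.comap (algebraMap D ↥T)) = TlocQ T Q

/-- `B` is a flat `A`-module (for subalgebras `A ⊆ B` of `K`, with the module structure
coming from the inclusion). -/
def FlatPair (A B : Subalgebra D K) : Prop :=
  ∃ h : A ≤ B, @Module.Flat ↥A ↥B _ _ ((Subalgebra.inclusion h).toRingHom.toModule)

/-- `B` is a flat `A`-module, for subrings `A ⊆ B` of a commutative ring. -/
def FlatSubring {L : Type*} [CommRing L] (A B : Subring L) : Prop :=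
  ∃ h : A ≤ B, @Module.Flat ↥A ↥B _ _ ((Subring.inclusion h).toModule)

end Overring

/-- The semistar integral closure `D^{[⋆]} = ∪ {(H^⋆ :_K H^⋆) : H nonzero f.g.}`,
as an overring of `D` (the union is already a ring). -/
def semistarIntClosure {D K : Type*} [CommRing D] [Field K] [Algebra D K]
    (s : SemistarOp D K) : Subalgebra D K :=
  Algebra.adjoin D {x : K | ∃ H : Submodule D K, H.FG ∧ H ≠ ⊥ ∧
    x ∈ (s.toFun H / s.toFun H : Submodule D K)}

/-- The complete integral closure of `D` in `K`: the elements `x ∈ K` such that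
`d·xⁿ ∈ D` for all `n ≥ 0`, for some nonzero `d ∈ D` (the set is already a ring). -/
def completeIntClosure (D K : Type*) [CommRing D] [Field K] [Algebra D K] :
    Subalgebra D K :=
  Algebra.adjoin D
    {x : K | ∃ d : D, d ≠ 0 ∧ ∀ n : ℕ, algebraMap D K d * x ^ n ∈ (⊥ : Subalgebra D K)}

section AuxGeneric

variable {R : Type*} {K : Type*} [CommRing R] [Field K] [Algebra R K]

lemma one_mem_one' : (1 : K) ∈ (1 : Submodule R K) :=
  Submodule.one_le.mp le_rfl

lemma one_ne_bot' : (1 : Submodule R K) ≠ ⊥ :=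
  (Submodule.ne_bot_iff _).mpr ⟨1, one_mem_one', one_ne_zero⟩

lemma mul_mem_one' {x y : K} (hx : x ∈ (1 : Submodule R K))
    (hy : y ∈ (1 : Submodule R K)) : x * y ∈ (1 : Submodule R K) := by
  obtain ⟨a, rfl⟩ := Submodule.mem_one.mp hx
  obtain ⟨b, rfl⟩ := Submodule.mem_one.mp hy
  exact Submodule.mem_one.mpr ⟨a * b, map_mul _ _ _⟩

lemma one_div_one' : (1 : Submodule R K) / 1 = 1 := by
  apply le_antisymm
  · intro x hx
    simpa using Submodule.mem_div_iff_forall_mul_mem.mp hx 1 one_mem_one'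
  · intro x hx
    exact Submodule.mem_div_iff_forall_mul_mem.mpr fun y hy => mul_mem_one' hx hy

lemma one_le_one_div' {A : Submodule R K} (hA : A ≤ 1) :
    (1 : Submodule R K) ≤ 1 / A := by
  intro x hx
  exact Submodule.mem_div_iff_forall_mul_mem.mpr fun y hy => mul_mem_one' hx (hA hy)

lemma div_le_div_denom' {A B X : Submodule R K} (h : A ≤ B) : X / B ≤ X / A := by
  intro z hz
  exact Submodule.mem_div_iff_forall_mul_mem.mpr fun y hy =>
    Submodule.mem_div_iff_forall_mul_mem.mp hz y (h hy)

lemma vOp_mono' {A B : Submodule R K} (h : A ≤ B) :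
    vOp (R := R) (K := K) A ≤ vOp (R := R) (K := K) B :=
  div_le_div_denom' (div_le_div_denom' h)

lemma vOp_one' : vOp (R := R) (K := K) 1 = 1 := by
  unfold vOp; rw [one_div_one', one_div_one']

lemma one_fg' : (1 : Submodule R K).FG :=
  ⟨{1}, by rw [Finset.coe_singleton, ← Submodule.one_eq_span]⟩

lemma tOp_eq_one' {A : Submodule R K} (hle : A ≤ 1) (hfg : A.FG) (hbot : A ≠ ⊥)
    (hdiv : (1 : Submodule R K) / A = 1) : tOp (R := R) (K := K) A = 1 := by
  have hv : vOp (R := R) (K := K) A = 1 := by unfold vOp; rw [hdiv, one_div_one']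
  apply le_antisymm
  · apply sSup_le
    rintro G ⟨F, hFG, hFb, hFle, rfl⟩
    exact le_trans (vOp_mono' hFle) (le_of_eq hv)
  · rw [← hv]
    exact le_sSup ⟨A, hfg, hbot, le_rfl, rfl⟩

lemma tOp_one' : tOp (R := R) (K := K) 1 = 1 :=
  tOp_eq_one' le_rfl one_fg' one_ne_bot' one_div_one'

lemma one_div_eq_one_of_tOp' {A : Submodule R K} (hle : A ≤ 1) (hfg : A.FG)
    (hbot : A ≠ ⊥) (h : tOp (R := R) (K := K) A = 1) :
    (1 : Submodule R K) / A = 1 := by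
  have h2 : tOp (R := R) (K := K) A ≤ vOp (R := R) (K := K) A := by
    apply sSup_le
    rintro G ⟨F, hFG, hFb, hFle, rfl⟩
    exact vOp_mono' hFle
  have h1 : (1 : Submodule R K) ≤ vOp (R := R) (K := K) A := h ▸ h2
  apply le_antisymm
  · intro w hw
    simpa using Submodule.mem_div_iff_forall_mul_mem.mp (h1 one_mem_one') w hw
  · exact one_le_one_div' hle

lemma one_div_pow_le' {A : Submodule R K} (h : (1 : Submodule R K) / A = 1) :
    ∀ n : ℕ, (1 : Submodule R K) / A ^ n ≤ 1 := by
  intro n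
  induction n with
  | zero => rw [pow_zero, one_div_one']
  | succ n ih =>
    intro z hz
    apply ih
    refine Submodule.mem_div_iff_forall_mul_mem.mpr fun m hm => ?_
    have hzA : z * m ∈ (1 : Submodule R K) / A := by
      refine Submodule.mem_div_iff_forall_mul_mem.mpr fun a ha => ?_
      rw [mul_assoc]
      exact Submodule.mem_div_iff_forall_mul_mem.mp hz _
        (by rw [pow_succ]; exact Submodule.mul_mem_mul hm ha)
    rw [← h]; exact hzA

lemma mul_ne_bot' {A B : Submodule R K} (hA : A ≠ ⊥) (hB : B ≠ ⊥) : A * B ≠ ⊥ := by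
  obtain ⟨a, haA, ha0⟩ := (Submodule.ne_bot_iff _).mp hA
  obtain ⟨b, hbB, hb0⟩ := (Submodule.ne_bot_iff _).mp hB
  exact (Submodule.ne_bot_iff _).mpr
    ⟨a * b, Submodule.mul_mem_mul haA hbB, mul_ne_zero ha0 hb0⟩

lemma pow_ne_bot' {A : Submodule R K} (hA : A ≠ ⊥) : ∀ n : ℕ, A ^ n ≠ ⊥ := by
  intro n
  induction n with
  | zero => rw [pow_zero]; exact one_ne_bot'
  | succ n ih => rw [pow_succ]; exact mul_ne_bot' ih hA

lemma smul_ne_bot' {x : K} (hx : x ≠ 0) {E : Submodule R K} (hE : E ≠ ⊥) :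
    x • E ≠ ⊥ := by
  obtain ⟨e, heE, he0⟩ := (Submodule.ne_bot_iff _).mp hE
  exact (Submodule.ne_bot_iff _).mpr
    ⟨x • e, Submodule.smul_mem_pointwise_smul e x E heE,
      by simpa [smul_eq_mul] using mul_ne_zero hx he0⟩

lemma smul_le_of' (x : K) {E F : Submodule R K} (h : ∀ e ∈ E, x * e ∈ F) :
    x • E ≤ F := by
  rw [Submodule.smul_def, Submodule.span_le]
  rintro _ ⟨e, he, rfl⟩
  simpa [smul_eq_mul] using h e he

end AuxGeneric
section AuxStar

variable {D : Type*} {K : Type*} [CommRing D] [IsDomain D] [Field K] [Algebra D K]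
  [IsFractionRing D K]

lemma star_ne_bot (s : SemistarOp D K) {E : Submodule D K} (hE : E ≠ ⊥) :
    s.toFun E ≠ ⊥ := by
  intro h
  exact hE (le_bot_iff.mp (h ▸ s.le_star' E hE))

lemma starMulStar (s : SemistarOp D K) (A B : Submodule D K) (hA : A ≠ ⊥)
    (hB : B ≠ ⊥) : s.toFun (A * B) = s.toFun (s.toFun A * B) := by
  have hsA := star_ne_bot s hA
  have hAB := mul_ne_bot' hA hB
  have hsAB := mul_ne_bot' hsA hB
  have h1 : A * B ≤ s.toFun A * B := mul_le_mul' (s.le_star' A hA) le_rfl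
  have h2 : s.toFun A * B ≤ s.toFun (A * B) := by
    rw [Submodule.mul_le]
    intro m hm n hn
    rcases eq_or_ne n 0 with rfl | hn0
    · simpa using (s.toFun (A * B)).zero_mem
    · have hnA : n • A ≤ A * B := smul_le_of' n (fun a ha => by
        have h' := Submodule.mul_mem_mul ha hn
        rwa [mul_comm a n] at h')
      have hmono : s.toFun (n • A) ≤ s.toFun (A * B) :=
        s.mono' _ _ (smul_ne_bot' hn0 hA) hAB hnA
      have hsm : n • s.toFun A ≤ s.toFun (A * B) := by
        rw [← s.smul' n hn0 A hA]; exact hmono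
      have : n • m ∈ n • s.toFun A := Submodule.smul_mem_pointwise_smul m n _ hm
      simpa [smul_eq_mul, mul_comm] using hsm this
  apply le_antisymm
  · exact s.mono' _ _ hAB hsAB h1
  · have h3 := s.mono' _ _ hsAB (star_ne_bot s hAB) h2
    rwa [s.idem' _ hAB] at h3

lemma star_pow_eq (s : SemistarOp D K) (A : Submodule D K) (hA : A ≠ ⊥)
    (h : s.toFun A = s.toFun 1) : ∀ n : ℕ, s.toFun (A ^ n) = s.toFun 1 := by
  intro n
  induction n with
  | zero => rw [pow_zero]
  | succ n ih =>
    calc s.toFun (A ^ (n + 1)) = s.toFun (A ^ n * A) := by rw [pow_succ]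
      _ = s.toFun (s.toFun (A ^ n) * A) := starMulStar s _ A (pow_ne_bot' hA n) hA
      _ = s.toFun (s.toFun 1 * A) := by rw [ih]
      _ = s.toFun (1 * A) := (starMulStar s 1 A one_ne_bot' hA).symm
      _ = s.toFun A := by rw [one_mul]
      _ = s.toFun 1 := h

lemma stab_mul (s : SemistarOp D K) (z : K) (A B : Submodule D K) (hA : A ≠ ⊥)
    (hB : B ≠ ⊥) (h : ∀ w ∈ s.toFun A, z * w ∈ s.toFun A) :
    ∀ w ∈ s.toFun (A * B), z * w ∈ s.toFun (A * B) := by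
  rcases eq_or_ne z 0 with rfl | hz
  · intro w _; simpa using (s.toFun (A * B)).zero_mem
  intro w hw
  have hsA := star_ne_bot s hA
  have hsAB' := mul_ne_bot' hsA hB
  have hkey : ∀ m ∈ s.toFun A * B, z * m ∈ s.toFun A * B := by
    intro m hm
    refine Submodule.mul_induction_on hm (fun a ha b hb => ?_)
      (fun m₁ m₂ h1 h2 => by rw [mul_add]; exact add_mem h1 h2)
    rw [← mul_assoc]
    exact Submodule.mul_mem_mul (h a ha) hb
  rw [starMulStar s A B hA hB] at hw ⊢
  have hsmle : z • (s.toFun A * B) ≤ s.toFun A * B := smul_le_of' z hkey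
  have h2 : z • s.toFun (s.toFun A * B) ≤ s.toFun (s.toFun A * B) := by
    rw [← s.smul' z hz _ hsAB']
    exact s.mono' _ _ (smul_ne_bot' hz hsAB') hsAB' hsmle
  have := h2 (Submodule.smul_mem_pointwise_smul w z _ hw)
  simpa [smul_eq_mul] using this

lemma idealSub_ne_bot {F : Ideal D} (hF : F ≠ ⊥) :
    (idealSub F : Submodule D K) ≠ ⊥ := by
  obtain ⟨f, hf, hf0⟩ := (Submodule.ne_bot_iff _).mp hF
  refine (Submodule.ne_bot_iff _).mpr ⟨algebraMap D K f, ?_, ?_⟩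
  · exact Submodule.mem_map_of_mem hf
  · intro h
    exact hf0 (IsFractionRing.injective D K (h.trans (map_zero _).symm))

lemma idealSub_span_eq (t : Finset D) :
    (idealSub (Ideal.span (t : Set D)) : Submodule D K) =
      Submodule.span D (algebraMap D K '' (t : Set D)) := by
  show Submodule.map (Algebra.linearMap D K) (Submodule.span D (t : Set D)) = _
  rw [Submodule.map_span]
  rfl

lemma idealSub_le_one (F : Ideal D) : (idealSub F : Submodule D K) ≤ 1 := by
  rintro _ ⟨f, _, rfl⟩
  exact Submodule.algebraMap_mem f

end AuxStar
section AuxKeys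

variable {D : Type*} {K : Type*} [CommRing D] [IsDomain D] [Field K] [Algebra D K]
  [IsFractionRing D K]

lemma mem_scIC (s : SemistarOp D K) {x : K} :
    x ∈ semistarIntClosure s ↔ ∃ H : Submodule D K, H.FG ∧ H ≠ ⊥ ∧
      x ∈ (s.toFun H / s.toFun H : Submodule D K) := by
  constructor
  · intro hx
    induction hx using Algebra.adjoin_induction with
    | mem y hy => exact hy
    | algebraMap r =>
      refine ⟨1, one_fg', one_ne_bot', Submodule.mem_div_iff_forall_mul_mem.mpr ?_⟩
      intro y hy
      rw [← Algebra.smul_def]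
      exact Submodule.smul_mem _ r hy
    | add y z hy hz ihy ihz =>
      obtain ⟨H₁, hfg1, hb1, hd1⟩ := ihy
      obtain ⟨H₂, hfg2, hb2, hd2⟩ := ihz
      refine ⟨H₁ * H₂, hfg1.mul hfg2, mul_ne_bot' hb1 hb2,
        Submodule.mem_div_iff_forall_mul_mem.mpr ?_⟩
      intro w hw
      have hy' := stab_mul s y H₁ H₂ hb1 hb2
        (Submodule.mem_div_iff_forall_mul_mem.mp hd1) w hw
      have hz' : z * w ∈ s.toFun (H₁ * H₂) := by
        rw [Submodule.mul_comm] at hw ⊢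
        exact stab_mul s z H₂ H₁ hb2 hb1
          (Submodule.mem_div_iff_forall_mul_mem.mp hd2) w hw
      rw [add_mul]
      exact add_mem hy' hz'
    | mul y z hy hz ihy ihz =>
      obtain ⟨H₁, hfg1, hb1, hd1⟩ := ihy
      obtain ⟨H₂, hfg2, hb2, hd2⟩ := ihz
      refine ⟨H₁ * H₂, hfg1.mul hfg2, mul_ne_bot' hb1 hb2,
        Submodule.mem_div_iff_forall_mul_mem.mpr ?_⟩
      intro w hw
      have hz' : z * w ∈ s.toFun (H₁ * H₂) := by
        rw [Submodule.mul_comm] at hw ⊢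
        exact stab_mul s z H₂ H₁ hb2 hb1
          (Submodule.mem_div_iff_forall_mul_mem.mp hd2) w hw
      have hy' := stab_mul s y H₁ H₂ hb1 hb2
        (Submodule.mem_div_iff_forall_mul_mem.mp hd1) _ hz'
      rw [mul_assoc]
      exact hy'
  · intro ⟨H, h1, h2, h3⟩
    exact Algebra.subset_adjoin ⟨H, h1, h2, h3⟩

lemma mem_bot_subalg_iff {x : K} :
    x ∈ (⊥ : Subalgebra D K) ↔ x ∈ (1 : Submodule D K) := by
  rw [Algebra.mem_bot, Submodule.mem_one]
  exact ⟨fun ⟨y, hy⟩ => ⟨y, hy⟩, fun ⟨y, hy⟩ => ⟨y, hy⟩⟩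

lemma mem_cIC {x : K} :
    x ∈ completeIntClosure D K ↔ ∃ d : D, d ≠ 0 ∧ ∀ n : ℕ,
      algebraMap D K d * x ^ n ∈ (⊥ : Subalgebra D K) := by
  constructor
  · intro hx
    induction hx using Algebra.adjoin_induction with
    | mem y hy => exact hy
    | algebraMap r =>
      refine ⟨1, one_ne_zero, fun n => ?_⟩
      rw [map_one, one_mul, ← map_pow]
      exact Algebra.mem_bot.mpr ⟨r ^ n, rfl⟩
    | add y z hy hz ihy ihz =>
      obtain ⟨d, hd0, hd⟩ := ihy
      obtain ⟨e, he0, he⟩ := ihz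
      refine ⟨d * e, mul_ne_zero hd0 he0, fun n => ?_⟩
      rw [add_pow, Finset.mul_sum]
      refine sum_mem fun k hk => ?_
      have heq : algebraMap D K (d * e) * (y ^ k * z ^ (n - k) * (n.choose k : K)) =
          (algebraMap D K d * y ^ k) * (algebraMap D K e * z ^ (n - k)) *
            (n.choose k : K) := by
        rw [map_mul]; ring
      rw [heq]
      exact mul_mem (mul_mem (hd k) (he (n - k))) (natCast_mem _ _)
    | mul y z hy hz ihy ihz =>
      obtain ⟨d, hd0, hd⟩ := ihy
      obtain ⟨e, he0, he⟩ := ihz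
      refine ⟨d * e, mul_ne_zero hd0 he0, fun n => ?_⟩
      have heq : algebraMap D K (d * e) * (y * z) ^ n =
          (algebraMap D K d * y ^ n) * (algebraMap D K e * z ^ n) := by
        rw [map_mul, mul_pow]; ring
      rw [heq]
      exact mul_mem (hd n) (he n)
  · intro ⟨d, h1, h2⟩
    exact Algebra.subset_adjoin ⟨d, h1, h2⟩

end AuxKeys
section AuxMain

variable {D : Type*} {K : Type*} [CommRing D] [IsDomain D] [Field K] [Algebra D K]
  [IsFractionRing D K]

lemma key1 (s : SemistarOp D K) (F : Ideal D) (hbF : F ≠ ⊥) (hfgF : F.FG)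
    (hst : s.toFun (idealSub F) = s.toFun 1) (x : K)
    (hx : ∀ f ∈ F, x * algebraMap D K f ∈ semistarIntClosure s) :
    x ∈ semistarIntClosure s := by
  classical
  rcases eq_or_ne x 0 with rfl | hx0
  · exact zero_mem _
  obtain ⟨t, ht⟩ := hfgF
  have hcomb : ∀ u : Finset D,
      (∀ f ∈ u, x * algebraMap D K f ∈ semistarIntClosure s) →
      ∃ H : Submodule D K, H.FG ∧ H ≠ ⊥ ∧
        ∀ f ∈ u, ∀ w ∈ s.toFun H, (x * algebraMap D K f) * w ∈ s.toFun H := by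
    intro u
    induction u using Finset.induction_on with
    | empty => exact fun _ => ⟨1, one_fg', one_ne_bot', by simp⟩
    | @insert g u hgu ih =>
      intro hmem
      obtain ⟨H₂, hfg2, hb2, h2⟩ := ih fun f hf => hmem f (Finset.mem_insert_of_mem hf)
      obtain ⟨H₁, hfg1, hb1, hdiv⟩ :=
        (mem_scIC s).mp (hmem g (Finset.mem_insert_self g u))
      refine ⟨H₁ * H₂, hfg1.mul hfg2, mul_ne_bot' hb1 hb2, ?_⟩
      intro f hf
      rcases Finset.mem_insert.mp hf with rfl | hf'
      · exact stab_mul s _ H₁ H₂ hb1 hb2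
          (Submodule.mem_div_iff_forall_mul_mem.mp hdiv)
      · intro w hw
        rw [Submodule.mul_comm] at hw ⊢
        exact stab_mul s _ H₂ H₁ hb2 hb1 (h2 f hf') w hw
  obtain ⟨H, hHfg, hHb, hH⟩ := hcomb t fun f hf =>
    hx f (by rw [← ht]; exact Ideal.subset_span hf)
  have hAb : (idealSub F : Submodule D K) ≠ ⊥ := idealSub_ne_bot hbF
  have hsH := star_ne_bot s hHb
  have hspan : ∀ a ∈ (idealSub F : Submodule D K),
      ∀ w ∈ s.toFun H, x * (a * w) ∈ s.toFun H := by
    have hre : (idealSub F : Submodule D K) =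
        Submodule.span D (algebraMap D K '' (t : Set D)) := by
      rw [← ht]; exact idealSub_span_eq t
    rw [hre]
    intro a ha
    induction ha using Submodule.span_induction with
    | mem a hmem =>
      obtain ⟨f, hf, rfl⟩ := hmem
      intro w hw
      rw [← mul_assoc]
      exact hH f hf w hw
    | zero => intro w hw; simpa using (s.toFun H).zero_mem
    | add a b ha hb iha ihb =>
      intro w hw
      have h' : x * ((a + b) * w) = x * (a * w) + x * (b * w) := by ring
      rw [h']
      exact add_mem (iha w hw) (ihb w hw)
    | smul r a ha iha =>
      intro w hw
      have h' : x * (r • a * w) = r • (x * (a * w)) := by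
        rw [Algebra.smul_def, Algebra.smul_def]; ring
      rw [h']
      exact Submodule.smul_mem _ r (iha w hw)
  have hmul : ∀ m ∈ (idealSub F : Submodule D K) * s.toFun H,
      x * m ∈ s.toFun H := by
    intro m hm
    refine Submodule.mul_induction_on hm (fun a ha w hw => hspan a ha w hw)
      (fun m₁ m₂ h1 h2 => by rw [mul_add]; exact add_mem h1 h2)
  have hchain : s.toFun ((idealSub F : Submodule D K) * s.toFun H) = s.toFun H := by
    calc s.toFun ((idealSub F : Submodule D K) * s.toFun H)
        = s.toFun (s.toFun H * (idealSub F : Submodule D K)) := by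
          rw [Submodule.mul_comm]
      _ = s.toFun (H * (idealSub F : Submodule D K)) :=
          (starMulStar s H _ hHb hAb).symm
      _ = s.toFun ((idealSub F : Submodule D K) * H) := by rw [Submodule.mul_comm]
      _ = s.toFun (s.toFun (idealSub F) * H) := starMulStar s _ H hAb hHb
      _ = s.toFun (s.toFun 1 * H) := by rw [hst]
      _ = s.toFun (1 * H) := (starMulStar s 1 H one_ne_bot' hHb).symm
      _ = s.toFun H := by rw [one_mul]
  have hASb : (idealSub F : Submodule D K) * s.toFun H ≠ ⊥ := mul_ne_bot' hAb hsH
  have hfin : ∀ w ∈ s.toFun H, x * w ∈ s.toFun H := by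
    intro w hw
    have h1 : x • ((idealSub F : Submodule D K) * s.toFun H) ≤ s.toFun H :=
      smul_le_of' x hmul
    have h2 : s.toFun (x • ((idealSub F : Submodule D K) * s.toFun H)) ≤
        s.toFun H := by
      have h3 := s.mono' _ _ (smul_ne_bot' hx0 hASb) hsH h1
      rwa [s.idem' _ hHb] at h3
    have h4 : x • s.toFun ((idealSub F : Submodule D K) * s.toFun H) ≤
        s.toFun H := by
      rw [← s.smul' x hx0 _ hASb]; exact h2
    rw [hchain] at h4
    have h5 := h4 (Submodule.smul_mem_pointwise_smul w x _ hw)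
    simpa [smul_eq_mul] using h5
  exact (mem_scIC s).mpr ⟨H, hHfg, hHb,
    Submodule.mem_div_iff_forall_mul_mem.mpr hfin⟩

end AuxMain
section AuxMain2

variable {D : Type*} {K : Type*} [CommRing D] [IsDomain D] [Field K] [Algebra D K]
  [IsFractionRing D K]

lemma almost_aux (F : Ideal D) (t : Finset D) (ht : Ideal.span (t : Set D) = F)
    (x : K) (hx : ∀ f ∈ t, x * algebraMap D K f ∈ completeIntClosure D K) :
    ∃ d : D, d ≠ 0 ∧ ∀ n : ℕ, ∀ b ∈ ((idealSub F : Submodule D K) ^ n),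
      algebraMap D K d * (x ^ n * b) ∈ (1 : Submodule D K) := by
  classical
  have H : ∀ f : D, ∃ d : D, f ∈ t → d ≠ 0 ∧ ∀ n : ℕ,
      algebraMap D K d * (x * algebraMap D K f) ^ n ∈ (1 : Submodule D K) := by
    intro f
    by_cases hf : f ∈ t
    · obtain ⟨d, h1, h2⟩ := mem_cIC.mp (hx f hf)
      exact ⟨d, fun _ => ⟨h1, fun n => mem_bot_subalg_iff.mp (h2 n)⟩⟩
    · exact ⟨1, fun h => absurd h hf⟩
  choose d hd using H
  set d0 : D := ∏ f ∈ t, d f with hd0def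
  have hd00 : d0 ≠ 0 := Finset.prod_ne_zero_iff.mpr fun f hf => (hd f hf).1
  set P : Set K :=
    {y | ∃ c : D → ℕ, y = ∏ f ∈ t, (x * algebraMap D K f) ^ c f} with hPdef
  set E := Submodule.span D P with hEdef
  have h1E : (1 : K) ∈ E :=
    Submodule.subset_span ⟨fun _ => 0, by simp⟩
  have hPmul : ∀ f ∈ t, ∀ y ∈ P, (x * algebraMap D K f) * y ∈ P := by
    rintro f hf y ⟨c, rfl⟩
    refine ⟨Function.update c f (c f + 1), ?_⟩
    rw [← Finset.mul_prod_erase t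
        (fun g => (x * algebraMap D K g) ^ Function.update c f (c f + 1) g) hf,
      ← Finset.mul_prod_erase t (fun g => (x * algebraMap D K g) ^ c g) hf]
    have hprod : ∏ g ∈ t.erase f,
        (x * algebraMap D K g) ^ Function.update c f (c f + 1) g =
        ∏ g ∈ t.erase f, (x * algebraMap D K g) ^ c g :=
      Finset.prod_congr rfl fun g hg => by
        rw [Function.update_of_ne (Finset.ne_of_mem_erase hg)]
    rw [hprod, Function.update_self, ← mul_assoc, ← pow_succ']
  have hEmul : ∀ f ∈ t, ∀ e ∈ E, (x * algebraMap D K f) * e ∈ E := by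
    intro f hf e he
    induction he using Submodule.span_induction with
    | mem y hy => exact Submodule.subset_span (hPmul f hf y hy)
    | zero => rw [mul_zero]; exact zero_mem _
    | add y z hy hz ihy ihz => rw [mul_add]; exact add_mem ihy ihz
    | smul r y hy ihy => rw [mul_smul_comm]; exact Submodule.smul_mem _ r ihy
  have hdE : ∀ e ∈ E, algebraMap D K d0 * e ∈ (1 : Submodule D K) := by
    intro e he
    induction he using Submodule.span_induction with
    | mem y hy =>
      obtain ⟨c, rfl⟩ := hy
      rw [hd0def, map_prod, ← Finset.prod_mul_distrib]
      refine Finset.prod_induction _ (fun z => z ∈ (1 : Submodule D K))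
        (fun a b ha hb => mul_mem_one' ha hb) one_mem_one' ?_
      intro f hf
      exact (hd f hf).2 (c f)
    | zero => rw [mul_zero]; exact zero_mem _
    | add y z hy hz ihy ihz => rw [mul_add]; exact add_mem ihy ihz
    | smul r y hy ihy => rw [mul_smul_comm]; exact Submodule.smul_mem _ r ihy
  have haE : ∀ a ∈ (idealSub F : Submodule D K), ∀ e ∈ E, x * (a * e) ∈ E := by
    have hre : (idealSub F : Submodule D K) =
        Submodule.span D (algebraMap D K '' (t : Set D)) := by
      rw [← ht]; exact idealSub_span_eq t
    rw [hre]
    intro a ha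
    induction ha using Submodule.span_induction with
    | mem a hmem =>
      obtain ⟨f, hf, rfl⟩ := hmem
      intro e he
      rw [← mul_assoc]
      exact hEmul f hf e he
    | zero => intro e he; simpa using E.zero_mem
    | add a b ha hb iha ihb =>
      intro e he
      have h' : x * ((a + b) * e) = x * (a * e) + x * (b * e) := by ring
      rw [h']; exact add_mem (iha e he) (ihb e he)
    | smul r a ha iha =>
      intro e he
      have h' : x * (r • a * e) = r • (x * (a * e)) := by
        rw [Algebra.smul_def, Algebra.smul_def]; ring
      rw [h']; exact Submodule.smul_mem _ r (iha e he)
  have hmain : ∀ n : ℕ, ∀ b ∈ ((idealSub F : Submodule D K) ^ n), x ^ n * b ∈ E := by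
    intro n
    induction n with
    | zero =>
      intro b hb
      rw [pow_zero] at hb
      obtain ⟨r, rfl⟩ := Submodule.mem_one.mp hb
      rw [pow_zero, one_mul, Algebra.algebraMap_eq_smul_one]
      exact Submodule.smul_mem _ r h1E
    | succ n ih =>
      intro b hb
      rw [pow_succ] at hb
      refine Submodule.mul_induction_on hb (fun m hm a ha => ?_)
        (fun m₁ m₂ h1 h2 => by rw [mul_add]; exact add_mem h1 h2)
      have h' : x ^ (n + 1) * (m * a) = x * (a * (x ^ n * m)) := by ring
      rw [h']
      exact haE a ha _ (ih m hm)
  exact ⟨d0, hd00, fun n b hb => hdE _ (hmain n b hb)⟩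

end AuxMain2
section AuxMain3

variable {D : Type*} {K : Type*} [CommRing D] [IsDomain D] [Field K] [Algebra D K]
  [IsFractionRing D K]

lemma key2 (s : SemistarOp D K) (hc : (1 : Submodule D K) / s.toFun 1 ≠ ⊥)
    (F : Ideal D) (hbF : F ≠ ⊥) (hfgF : F.FG)
    (hst : s.toFun (idealSub F) = s.toFun 1) (x : K)
    (hx : ∀ f ∈ F, x * algebraMap D K f ∈ completeIntClosure D K) :
    x ∈ completeIntClosure D K := by
  rcases eq_or_ne x 0 with rfl | hx0
  · exact zero_mem _
  obtain ⟨t, ht⟩ := hfgF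
  obtain ⟨d, hd0, hd⟩ := almost_aux F t ht x fun f hf =>
    hx f (by rw [← ht]; exact Ideal.subset_span hf)
  obtain ⟨c, hcmem, hc0⟩ := (Submodule.ne_bot_iff _).mp hc
  have hcP : ∀ y ∈ s.toFun 1, c * y ∈ (1 : Submodule D K) :=
    Submodule.mem_div_iff_forall_mul_mem.mp hcmem
  have h1s : (1 : K) ∈ s.toFun 1 := s.le_star' 1 one_ne_bot' one_mem_one'
  obtain ⟨c₀, hc₀⟩ := Submodule.mem_one.mp (by simpa using hcP 1 h1s)
  have hc₀0 : c₀ ≠ 0 := fun h => hc0 (by rw [← hc₀, h, map_zero])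
  have hAb : (idealSub F : Submodule D K) ≠ ⊥ := idealSub_ne_bot hbF
  have hsPow := star_pow_eq s (idealSub F) hAb hst
  have hdK : algebraMap D K d ≠ 0 := fun h =>
    hd0 (IsFractionRing.injective D K (h.trans (map_zero _).symm))
  have hstep : ∀ n : ℕ, algebraMap D K d * x ^ n ∈ s.toFun 1 := by
    intro n
    have hz : algebraMap D K d * x ^ n ≠ 0 := mul_ne_zero hdK (pow_ne_zero _ hx0)
    have hle : (algebraMap D K d * x ^ n) • ((idealSub F : Submodule D K) ^ n) ≤
        (1 : Submodule D K) := by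
      refine smul_le_of' _ fun b hb => ?_
      have := hd n b hb
      rwa [← mul_assoc] at this
    have h2 : (algebraMap D K d * x ^ n) •
        s.toFun ((idealSub F : Submodule D K) ^ n) ≤ s.toFun 1 := by
      rw [← s.smul' _ hz _ (pow_ne_bot' hAb n)]
      exact s.mono' _ _ (smul_ne_bot' hz (pow_ne_bot' hAb n)) one_ne_bot' hle
    rw [hsPow n] at h2
    have h3 := h2 (Submodule.smul_mem_pointwise_smul 1 _ _ h1s)
    simpa [smul_eq_mul] using h3
  refine mem_cIC.mpr ⟨c₀ * d, mul_ne_zero hc₀0 hd0, fun n => ?_⟩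
  have h4 := hcP _ (hstep n)
  have heq : algebraMap D K (c₀ * d) * x ^ n = c * (algebraMap D K d * x ^ n) := by
    rw [map_mul, hc₀, mul_assoc]
  rw [heq]
  exact mem_bot_subalg_iff.mpr h4

lemma key3 (F : Ideal D) (hbF : F ≠ ⊥) (hfgF : F.FG)
    (hst : tOp (R := D) (K := K) (idealSub F) = tOp (R := D) (K := K) 1) (x : K)
    (hx : ∀ f ∈ F, x * algebraMap D K f ∈ completeIntClosure D K) :
    x ∈ completeIntClosure D K := by
  rcases eq_or_ne x 0 with rfl | hx0
  · exact zero_mem _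
  obtain ⟨t, ht⟩ := hfgF
  obtain ⟨d, hd0, hd⟩ := almost_aux F t ht x fun f hf =>
    hx f (by rw [← ht]; exact Ideal.subset_span hf)
  have hAb : (idealSub F : Submodule D K) ≠ ⊥ := idealSub_ne_bot hbF
  have hAle : (idealSub F : Submodule D K) ≤ 1 := idealSub_le_one F
  have hAfg : (idealSub F : Submodule D K).FG := by
    have hre : (idealSub F : Submodule D K) =
        Submodule.span D (algebraMap D K '' (t : Set D)) := by
      rw [← ht]; exact idealSub_span_eq t
    rw [hre]
    exact Submodule.fg_span ((t : Set D).toFinite.image _)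
  have hdiv : (1 : Submodule D K) / (idealSub F : Submodule D K) = 1 :=
    one_div_eq_one_of_tOp' hAle hAfg hAb (by rw [hst, tOp_one'])
  have hpow := one_div_pow_le' hdiv
  refine mem_cIC.mpr ⟨d, hd0, fun n => ?_⟩
  have hmem : algebraMap D K d * x ^ n ∈
      (1 : Submodule D K) / ((idealSub F : Submodule D K) ^ n) := by
    refine Submodule.mem_div_iff_forall_mul_mem.mpr fun b hb => ?_
    have := hd n b hb
    rwa [← mul_assoc] at this
  exact mem_bot_subalg_iff.mpr (hpow n hmem)

lemma tlinked_of (T : Subalgebra D K) (f : Submodule D K → Submodule D K)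
    (h : ∀ F : Ideal D, F ≠ ⊥ → F.FG → f (idealSub F) = f 1 →
      ∀ x : K, (∀ g ∈ F, x * algebraMap D K g ∈ T) → x ∈ T) :
    TLinked f T := by
  intro F hbF hfgF hst
  set A : Submodule ↥T K := extT T (idealSub F) with hAdef
  have hA1 : A ≤ (1 : Submodule ↥T K) := by
    rw [hAdef]
    refine Submodule.span_le.mpr ?_
    rintro _ ⟨g, hg, rfl⟩
    exact Submodule.mem_one.mpr ⟨⟨algebraMap D K g, T.algebraMap_mem g⟩, rfl⟩
  obtain ⟨t, ht⟩ := hfgF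
  have hfgA : A.FG := by
    have hre : A = Submodule.span ↥T (algebraMap D K '' (t : Set D)) := by
      rw [hAdef]
      apply le_antisymm
      · refine Submodule.span_le.mpr ?_
        intro y hy
        have hy' : y ∈ (idealSub (Ideal.span (t : Set D)) : Submodule D K) := by
          rwa [ht]
        rw [idealSub_span_eq t] at hy'
        clear hy
        induction hy' using Submodule.span_induction with
        | mem z hz => exact Submodule.subset_span hz
        | zero => exact zero_mem _
        | add a b _ _ iha ihb => exact add_mem iha ihb
        | smul r a _ iha =>
          have : r • a = (⟨algebraMap D K r, T.algebraMap_mem r⟩ : ↥T) • a := by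
            rw [Algebra.smul_def]
            rfl
          rw [this]
          exact Submodule.smul_mem _ _ iha
      · refine Submodule.span_le.mpr ?_
        rintro _ ⟨g, hg, rfl⟩
        refine Submodule.subset_span ?_
        exact ⟨g, by rw [← ht]; exact Ideal.subset_span hg, rfl⟩
    rw [hre]
    exact Submodule.fg_span ((t : Set D).toFinite.image _)
  have hAb : A ≠ ⊥ := by
    obtain ⟨g, hg, hg0⟩ := (Submodule.ne_bot_iff _).mp hbF
    refine (Submodule.ne_bot_iff _).mpr ⟨algebraMap D K g, ?_, ?_⟩
    · exact Submodule.subset_span (Submodule.mem_map_of_mem hg)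
    · intro hz
      exact hg0 (IsFractionRing.injective D K (hz.trans (map_zero _).symm))
  have hdiv : (1 : Submodule ↥T K) / A = 1 := by
    apply le_antisymm
    · intro z hz
      have hzT : z ∈ T := by
        refine h F hbF ⟨t, ht⟩ hst z fun g hg => ?_
        have hgA : algebraMap D K g ∈ A :=
          Submodule.subset_span (Submodule.mem_map_of_mem hg)
        obtain ⟨u, hu⟩ := Submodule.mem_one.mp
          (Submodule.mem_div_iff_forall_mul_mem.mp hz _ hgA)
        rw [← hu]
        exact u.2
      exact Submodule.mem_one.mpr ⟨⟨z, hzT⟩, rfl⟩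
    · exact one_le_one_div' hA1
  show tOp (R := ↥T) (K := K) A = tOp (R := ↥T) (K := K) 1
  rw [tOp_eq_one' hA1 hfgA hAb hdiv, tOp_one']

end AuxMain3
/-- **Corollary 3.6.** `D^{[⋆]}` is `t`-linked to `(D,⋆)`; if `(D : D^⋆) ≠ 0`, the complete
integral closure of `D` is `t`-linked to `(D,⋆)`; and the complete integral closure of `D`
is always `t`-linked to `D` (i.e. `(t_D, t)`-linked). -/
theorem semistarIntClosure_tLinked_and_completeIntClosure_tLinked
    {D K : Type*} [CommRing D] [IsDomain D] [Field K] [Algebra D K] [IsFractionRing D K]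
    (s : SemistarOp D K) :
    TLinked s.toFun (semistarIntClosure s) ∧
    ((1 : Submodule D K) / s.toFun 1 ≠ ⊥ → TLinked s.toFun (completeIntClosure D K)) ∧
    TLinked (tOp (R := D) (K := K)) (completeIntClosure D K) := by
  refine ⟨?_, fun hc => ?_, ?_⟩
  · exact tlinked_of _ _ (key1 s)
  · exact tlinked_of _ _ (key2 s hc)
  · exact tlinked_of _ _ key3
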